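/- Marked Grothendieck computation of marked colimits in Cat (1-categorical version): let C be a category with a marking W ⊆ C and F : C ⥤ Cat. For any category X, there is a natural bijection between (a) functors ∫F ⥤ X that send every cocartesian morphism lying over a marked morphism of C to an isomorphism, and (b) lax cocones (α_c, θ_f) under F with vertex X such that θ_f is a natural isomorphism whenever f ∈ W. -/

import Mathlib

open CategoryTheory

universe v u v₂ u₂

variable {C : Type u} [Category.{v} C]

/-- A lax cocone under `F : C ⥤ Cat` with vertex `X`: functors `α_c : F c ⥤ X` together
with natural transformations `θ_f : α_c ⟶ F f ⋙ α_c'` satisfying unitality and the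
cocycle condition. -/
structure LaxCocone (F : C ⥤ Cat.{v₂, u₂}) (X : Type u₂) [Category.{v₂} X] where
  fib : ∀ c : C, F.obj c ⥤ X
  hom : ∀ {c c' : C} (f : c ⟶ c'), fib c ⟶ (F.map f).toFunctor ⋙ fib c'
  hom_id : ∀ c : C, hom (𝟙 c) =
    eqToHom (show fib c = (F.map (𝟙 c)).toFunctor ⋙ fib c by rw [CategoryTheory.Functor.map_id]; rfl)
  hom_comp : ∀ (c₁ c₂ c₃ : C) (f : c₁ ⟶ c₂) (g : c₂ ⟶ c₃), hom (f ≫ g) =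
    hom f ≫ Functor.whiskerLeft (F.map f).toFunctor (hom g) ≫
      eqToHom (show (F.map f).toFunctor ⋙ ((F.map g).toFunctor ⋙ fib c₃) = (F.map (f ≫ g)).toFunctor ⋙ fib c₃ by
        rw [CategoryTheory.Functor.map_comp]; rfl)

/-- The functor `∫F ⥤ X` associated to a lax cocone under `F` with vertex `X`. -/
def LaxCocone.toFunctor {F : C ⥤ Cat.{v₂, u₂}} {X : Type u₂} [Category.{v₂} X]
    (L : LaxCocone F X) : Grothendieck F ⥤ X :=
  Grothendieck.functorFrom L.fib L.hom L.hom_id L.hom_comp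

namespace LaxCocone

variable {F : C ⥤ Cat.{v₂, u₂}} {X : Type u₂} [Category.{v₂} X]

lemma toFunctor_map (L : LaxCocone F X) {a b : Grothendieck F} (φ : a ⟶ b) :
    L.toFunctor.map φ = (L.hom φ.base).app a.fiber ≫ (L.fib b.base).map φ.fiber := rfl

def ofFunctor (G : Grothendieck F ⥤ X) : LaxCocone F X where
  fib c := Grothendieck.ι F c ⋙ G
  hom f := Functor.whiskerRight (Grothendieck.ιNatTrans f) G
  hom_id c := by
    ext d
    have p : (⟨c, d⟩ : Grothendieck F) = ⟨c, (F.map (𝟙 c)).toFunctor.obj d⟩ := by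
      rw [CategoryTheory.Functor.map_id]; rfl
    have key : (Grothendieck.ιNatTrans (𝟙 c)).app d = eqToHom p := by
      rw [Grothendieck.eqToHom_eq]
      fapply Grothendieck.ext
      · rfl
      · simp
        exact Category.comp_id _
    simp [key, eqToHom_app]
    exact eqToHom_map G p
  hom_comp c₁ c₂ c₃ f g := by
    ext d
    have p : (⟨c₃, (F.map g).toFunctor.obj ((F.map f).toFunctor.obj d)⟩ : Grothendieck F)
        = ⟨c₃, (F.map (f ≫ g)).toFunctor.obj d⟩ := by
      rw [CategoryTheory.Functor.map_comp]; rfl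
    have key : (Grothendieck.ιNatTrans (f ≫ g)).app d
        = (Grothendieck.ιNatTrans f).app d ≫ (Grothendieck.ιNatTrans g).app ((F.map f).toFunctor.obj d)
          ≫ eqToHom p := by
      erw [Grothendieck.eqToHom_eq]
      fapply Grothendieck.ext
      · simp
        erw [eqToHom_refl, Category.comp_id]
        rfl
      · dsimp [Grothendieck.ι, Grothendieck.ιNatTrans]
        simp [Grothendieck.comp_fiber, eqToHom_map]
        erw [CategoryTheory.Functor.map_id (F.map (g ≫ 𝟙 c₃)).toFunctor, CategoryTheory.Functor.map_id (F.map (𝟙 c₃)).toFunctor]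
        erw [Category.id_comp, Category.id_comp]
        refine (Category.comp_id _).trans ?_
        refine Eq.trans ?_ (eqToHom_trans_assoc _ _ _).symm
        exact (eqToHom_trans _ _).symm
    simp [key, eqToHom_map, eqToHom_app]
    erw [G.map_comp, G.map_comp, eqToHom_map]

lemma toFunctor_ofFunctor (G : Grothendieck F ⥤ X) : (ofFunctor G).toFunctor = G := by
  fapply CategoryTheory.Functor.ext
  · intro a; rfl
  · intro a b φ
    have : φ = (Grothendieck.ιNatTrans φ.base).app a.fiber ≫ (Grothendieck.ι F b.base).map φ.fiber := by
      fapply Grothendieck.ext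
      · simp
        exact (Category.comp_id _).symm
      · rcases a with ⟨a, x⟩
        rcases b with ⟨b, y⟩
        rcases φ with ⟨f, g⟩
        dsimp [Grothendieck.ι, Grothendieck.ιNatTrans]
        simp
        erw [(F.map (𝟙 b)).toFunctor.map_id]
        erw [Category.id_comp, eqToHom_trans_assoc]
    rw [toFunctor_map]
    conv_rhs => rw [this]
    simp [ofFunctor]
    erw [G.map_comp]
    erw [eqToHom_refl, eqToHom_refl, Category.id_comp, Category.comp_id]
    rfl

lemma fib_eq (L : LaxCocone F X) (c : C) : Grothendieck.ι F c ⋙ L.toFunctor = L.fib c := by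
  fapply CategoryTheory.Functor.ext
  · intro d; rfl
  · intro d d' φ
    show (L.hom (𝟙 c)).app d ≫ (L.fib c).map (eqToHom _ ≫ φ) = _
    simp [toFunctor_map, L.hom_id, eqToHom_app, eqToHom_map]
    erw [eqToHom_refl, eqToHom_refl, Category.id_comp, Category.comp_id]

lemma hom_app_eq (L : LaxCocone F X) {c c' : C} (f : c ⟶ c') (d : F.obj c) :
    (L.hom f).app d = L.toFunctor.map ((Grothendieck.ιNatTrans f).app d) := by
  simp [toFunctor_map]
  exact (by simp : (L.hom f).app d = (L.hom f).app d ≫ (L.fib c').map (𝟙 ((F.map f).toFunctor.obj d)))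

lemma ext' {L₁ L₂ : LaxCocone F X} (hfib : L₁.fib = L₂.fib)
    (hhom : ∀ (c c' : C) (f : c ⟶ c'), L₁.hom f =
      eqToHom (by rw [hfib]) ≫ L₂.hom f ≫ eqToHom (by rw [hfib])) : L₁ = L₂ := by
  rcases L₁ with ⟨fib₁, hom₁, hi₁, hc₁⟩
  rcases L₂ with ⟨fib₂, hom₂, hi₂, hc₂⟩
  obtain rfl : fib₁ = fib₂ := hfib
  have : @hom₁ = @hom₂ := by
    funext c c' f
    simpa using hhom c c' f
  subst this
  rfl

lemma eq_ofFunctor (L : LaxCocone F X) : L = ofFunctor L.toFunctor := by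
  apply ext' (funext fun c => (L.fib_eq c).symm)
  intro c c' f
  ext d
  rw [NatTrans.comp_app, NatTrans.comp_app, eqToHom_app, eqToHom_app, hom_app_eq]
  generalize_proofs p1 p2
  rw [show eqToHom p1 = 𝟙 _ from rfl, show eqToHom p2 = 𝟙 _ from rfl]
  erw [Category.id_comp, Category.comp_id]
  rfl

end LaxCocone

/-- Marked Grothendieck computation of marked colimits in `Cat`: for a marking `W` of
`C`, the correspondence between functors `∫F ⥤ X` and lax cocones under `F` restricts
to a bijection between functors inverting every cocartesian morphism lying over a
marked morphism and lax cocones whose structure transformation `θ_f` is invertible for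
every marked `f`. -/
theorem grothendieck_marked_functors_equiv_markedCocones
    (F : C ⥤ Cat.{v₂, u₂}) (X : Type u₂) [Category.{v₂} X]
    (W : MorphismProperty C) :
    (∀ L : LaxCocone F X,
      (∀ {c c' : C} (f : c ⟶ c'), W f → IsIso (L.hom f)) →
      ∀ {a b : Grothendieck F} (φ : a ⟶ b), IsIso φ.fiber → W φ.base →
        IsIso (L.toFunctor.map φ)) ∧
    (∀ G : Grothendieck F ⥤ X,
      (∀ {a b : Grothendieck F} (φ : a ⟶ b), IsIso φ.fiber → W φ.base →
        IsIso (G.map φ)) →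
      ∃! L : LaxCocone F X,
        (∀ {c c' : C} (f : c ⟶ c'), W f → IsIso (L.hom f)) ∧
        L.toFunctor = G) := by
  refine ⟨?_, ?_⟩
  · intro L hL a b φ hφ hW
    have := hL φ.base hW
    rw [L.toFunctor_map]
    have h1 : IsIso ((L.hom φ.base).app a.fiber) := @NatIso.isIso_app_of_isIso _ _ _ _ _ _ _ this a.fiber
    have h2 : IsIso ((L.fib b.base).map φ.fiber) := Functor.map_isIso _ _
    exact @IsIso.comp_isIso _ _ _ _ _ _ _ h1 h2
  · intro G hG
    refine ⟨LaxCocone.ofFunctor G, ⟨?_, LaxCocone.toFunctor_ofFunctor G⟩, ?_⟩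
    · intro c c' f hf
      have : ∀ d, IsIso (((LaxCocone.ofFunctor G).hom f).app d) := by
        intro d
        show IsIso (G.map ((Grothendieck.ιNatTrans f).app d))
        exact hG _ (by exact IsIso.id _) hf
      exact NatIso.isIso_of_isIso_app _
    · rintro L ⟨-, rfl⟩
      exact L.eq_ofFunctor
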